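/- Let R be a commutative ring, ℓ a length function on R, and α, β ∈ R with β not a zero-divisor. Then ℓ(R/αβR) = ℓ(R/αR) + ℓ(R/βR). -/

import Mathlib

open scoped ENNReal

universe u

structure LengthFunction (R : Type u) [CommRing R] where
  toFun : ∀ (M : Type u) [AddCommGroup M] [Module R M], ℝ≥0∞
  zero' : ∀ (M : Type u) [AddCommGroup M] [Module R M], Subsingleton M → toFun M = 0
  additive : ∀ (M₁ M₂ M₃ : Type u) [AddCommGroup M₁] [Module R M₁]
      [AddCommGroup M₂] [Module R M₂] [AddCommGroup M₃] [Module R M₃]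
      (f : M₁ →ₗ[R] M₂) (g : M₂ →ₗ[R] M₃),
      Function.Injective f → Function.Surjective g →
      LinearMap.range f = LinearMap.ker g →
      toFun M₂ = toFun M₁ + toFun M₃
  upperContinuous : ∀ (M : Type u) [AddCommGroup M] [Module R M],
      toFun M = ⨆ (N : Submodule R M) (_ : N.FG), toFun N

theorem length_quot_mul_eq {R : Type u} [CommRing R] (ℓ : LengthFunction R) (α β : R)
    (hβ : β ∈ nonZeroDivisors R) :
    ℓ.toFun (R ⧸ Ideal.span {α * β}) =
      ℓ.toFun (R ⧸ Ideal.span {α}) + ℓ.toFun (R ⧸ Ideal.span {β}) := by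
  have hf : Ideal.span {α} ≤
      Submodule.comap (LinearMap.toSpanSingleton R R β) (Ideal.span {α * β}) := by
    rw [Ideal.span_le]
    rintro x hx
    simp only [Set.mem_singleton_iff] at hx
    subst hx
    simp only [SetLike.mem_coe, Submodule.mem_comap, LinearMap.toSpanSingleton_apply,
      smul_eq_mul, Ideal.mem_span_singleton]
    exact dvd_rfl
  have hg : Ideal.span {α * β} ≤ Submodule.comap (LinearMap.id (R := R) (M := R)) (Ideal.span {β}) := by
    rw [Ideal.span_le]
    rintro x hx
    simp only [Set.mem_singleton_iff] at hx
    subst hx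
    simp only [SetLike.mem_coe, Submodule.mem_comap, LinearMap.id_coe, id_eq,
      Ideal.mem_span_singleton]
    exact Dvd.intro_left α rfl
  set f : (R ⧸ Ideal.span {α}) →ₗ[R] (R ⧸ Ideal.span {α * β}) :=
    Submodule.mapQ _ _ (LinearMap.toSpanSingleton R R β) hf with hfdef
  set g : (R ⧸ Ideal.span {α * β}) →ₗ[R] (R ⧸ Ideal.span {β}) :=
    Submodule.mapQ _ _ LinearMap.id hg with hgdef
  have hinj : Function.Injective f := by
    rw [← LinearMap.ker_eq_bot, eq_bot_iff]
    rintro x hx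
    obtain ⟨r, rfl⟩ := Submodule.Quotient.mk_surjective _ x
    simp only [LinearMap.mem_ker, hfdef, Submodule.mapQ_apply,
      LinearMap.toSpanSingleton_apply, smul_eq_mul,
      Submodule.Quotient.mk_eq_zero, Ideal.mem_span_singleton] at hx
    obtain ⟨c, hc⟩ := hx
    simp only [Submodule.mem_bot, Submodule.Quotient.mk_eq_zero, Ideal.mem_span_singleton]
    refine ⟨c, ?_⟩
    have h0 : (r - α * c) * β = 0 := by linear_combination hc
    have := hβ.2 _ h0
    linear_combination this
  have hsurj : Function.Surjective g := by
    rintro y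
    obtain ⟨r, rfl⟩ := Submodule.Quotient.mk_surjective _ y
    exact ⟨Submodule.Quotient.mk r, rfl⟩
  have hrange : LinearMap.range f = LinearMap.ker g := by
    ext x
    obtain ⟨r, rfl⟩ := Submodule.Quotient.mk_surjective _ x
    simp only [LinearMap.mem_range, LinearMap.mem_ker, hfdef, hgdef, Submodule.mapQ_apply,
      LinearMap.id_coe, id_eq, Submodule.Quotient.mk_eq_zero, Ideal.mem_span_singleton]
    constructor
    · rintro ⟨y, hy⟩
      obtain ⟨s, rfl⟩ := Submodule.Quotient.mk_surjective _ y
      rw [Submodule.mapQ_apply] at hy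
      have : r - s • β ∈ Ideal.span {α * β} := by
        rwa [← Submodule.Quotient.mk_eq_zero, Submodule.Quotient.mk_sub, sub_eq_zero, eq_comm]
      rw [Ideal.mem_span_singleton] at this
      obtain ⟨c, hc⟩ := this
      exact ⟨s + α * c, by simp only [smul_eq_mul] at hc ⊢; linear_combination hc⟩
    · rintro ⟨c, hc⟩
      refine ⟨Submodule.Quotient.mk c, ?_⟩
      rw [Submodule.mapQ_apply]
      simp only [LinearMap.toSpanSingleton_apply, smul_eq_mul]
      rw [hc]
      exact congrArg _ (mul_comm c β)
  exact ℓ.additive _ _ _ f g hinj hsurj hrange
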